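/- arXiv:1312.5701 — 2 statements merged into one kernel-verified Lean document; each statement's English description precedes it below -/
import Mathlib

section
/- Let f : ℕ → ℝ be an arithmetic function, N, H positive integers, and let M_f(x,H) be any real-valued function of the integer x. Define the Selberg integral J_f(N,H) = Σ_{N<x≤2N} |Σ_{x<n≤x+H} f(n) − M_f(x,H)|², the modified Selberg integral J̃_f(N,H) = Σ_{N<x≤2N} |(1/H)·Σ_{h≤H} Σ_{x−h<n<x+h} f(n) − M_f(x,H)|², and J_{w′,f}(N,H) = Σ_{N<x≤2N} |Σ_{n≥1} (C_H(n−x) − u_H(n−x)) f(n)|². Then |J̃_f(N,H) − J_f(N,H)| ≤ √(2 · J_{w′,f}(N,H) · (J̃_f(N,H) + J_f(N,H))). -/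
/-- The restriction to `[-H,H]` of the unit step weight: `u_H(a) = 1` if `0 < a ≤ H`. -/
noncomputable def uH (H : ℕ) (a : ℤ) : ℝ := if 0 < a ∧ a ≤ (H : ℤ) then 1 else 0

/-- The Cesaro weight `C_H(a) = max(1 - |a|/H, 0)` (vanishing outside `[-H,H]`). -/
noncomputable def cesaroH (H : ℕ) (a : ℤ) : ℝ := max (1 - |(a : ℝ)| / (H : ℝ)) 0

/-- The Selberg integral `J_f(N,H)` with mean value `M_f(x,H)`. -/
noncomputable def Jsel (f : ℕ → ℝ) (Mf : ℕ → ℝ) (N H : ℕ) : ℝ :=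
  ∑ x ∈ Finset.Ioc N (2 * N), (∑ n ∈ Finset.Ioc x (x + H), f n - Mf x) ^ 2

/-- The modified Selberg integral `J̃_f(N,H)` with mean value `M_f(x,H)`. -/
noncomputable def Jtil (f : ℕ → ℝ) (Mf : ℕ → ℝ) (N H : ℕ) : ℝ :=
  ∑ x ∈ Finset.Ioc N (2 * N),
    ((1 / (H : ℝ)) * ∑ h ∈ Finset.Icc 1 H, ∑ n ∈ Finset.Ioo (x - h) (x + h), f n - Mf x) ^ 2

/-- `J_{w′,f}(N,H) = Σ_{N<x≤2N} |Σ_{n≥1} (C_H(n-x) - u_H(n-x)) f(n)|²` (the weight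
vanishes outside `[-H,H]`, so the inner sum is over `1 ≤ n ≤ x+H`). -/
noncomputable def Jw' (f : ℕ → ℝ) (N H : ℕ) : ℝ :=
  ∑ x ∈ Finset.Ioc N (2 * N),
    (∑ n ∈ Finset.Icc 1 (x + H),
      (cesaroH H ((n : ℤ) - (x : ℤ)) - uH H ((n : ℤ) - (x : ℤ))) * f n) ^ 2


lemma ces_eq (H : ℕ) (hH : 0 < H) (z : ℤ) :
    cesaroH H z = ((H - z.natAbs : ℕ) : ℝ) / H := by
  have habs : |(z : ℝ)| = (z.natAbs : ℝ) := by
    rw [← Int.cast_abs, Int.abs_eq_natAbs, Int.cast_natCast]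
  have hHpos : (0:ℝ) < H := by exact_mod_cast hH
  unfold cesaroH
  rcases le_or_gt z.natAbs H with h | h
  · rw [Nat.cast_sub h, max_eq_left, habs]
    · field_simp
    · rw [habs, sub_nonneg, div_le_one hHpos]
      exact_mod_cast h
  · rw [Nat.sub_eq_zero_of_le h.le, max_eq_right, Nat.cast_zero, zero_div]
    rw [habs, sub_nonpos, le_div_iff₀ hHpos, one_mul]
    exact_mod_cast h.le

lemma E1 (f : ℕ → ℝ) (x H : ℕ) (hH : 0 < H) (hx : 1 ≤ x) :
    (1 / (H : ℝ)) * ∑ h ∈ Finset.Icc 1 H, ∑ n ∈ Finset.Ioo (x - h) (x + h), f n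
      = ∑ n ∈ Finset.Icc 1 (x + H), cesaroH H ((n : ℤ) - (x : ℤ)) * f n := by
  have step1 : ∀ h ∈ Finset.Icc 1 H,
      (∑ n ∈ Finset.Ioo (x - h) (x + h), f n)
        = ∑ n ∈ Finset.Icc 1 (x + H), if n ∈ Finset.Ioo (x - h) (x + h) then f n else 0 := by
    intro h hh
    rw [Finset.sum_ite_mem, Finset.inter_eq_right.mpr]
    intro n hn
    simp only [Finset.mem_Ioo] at hn
    simp only [Finset.mem_Icc] at hh ⊢
    omega
  rw [Finset.sum_congr rfl step1, Finset.sum_comm, Finset.mul_sum]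
  refine Finset.sum_congr rfl fun n hn => ?_
  rw [← Finset.sum_filter, Finset.sum_const]
  have hfil : (Finset.Icc 1 H).filter (fun h => n ∈ Finset.Ioo (x - h) (x + h))
      = Finset.Ioc ((n : ℤ) - (x : ℤ)).natAbs H := by
    ext h
    simp only [Finset.mem_filter, Finset.mem_Icc, Finset.mem_Ioo, Finset.mem_Ioc]
    have hn' := Finset.mem_Icc.mp hn
    omega
  rw [hfil, Nat.card_Ioc, nsmul_eq_mul, ces_eq H hH]
  ring

lemma E2 (f : ℕ → ℝ) (x H : ℕ) (hx : 1 ≤ x) :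
    (∑ n ∈ Finset.Ioc x (x + H), f n)
      = ∑ n ∈ Finset.Icc 1 (x + H), uH H ((n : ℤ) - (x : ℤ)) * f n := by
  have : ∀ n ∈ Finset.Icc 1 (x + H),
      uH H ((n : ℤ) - (x : ℤ)) * f n = if n ∈ Finset.Ioc x (x + H) then f n else 0 := by
    intro n hn
    unfold uH
    have hiff : (0 < (n : ℤ) - (x : ℤ) ∧ (n : ℤ) - (x : ℤ) ≤ (H : ℤ)) ↔ n ∈ Finset.Ioc x (x + H) := by
      simp only [Finset.mem_Ioc]; omega
    simp only [hiff]
    split_ifs <;> ring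
  rw [Finset.sum_congr rfl this, Finset.sum_ite_mem, Finset.inter_eq_right.mpr]
  intro n hn
  simp only [Finset.mem_Ioc] at hn
  simp only [Finset.mem_Icc]
  omega

lemma CSkey (s : Finset ℕ) (a b : ℕ → ℝ) :
    |(∑ x ∈ s, (a x) ^ 2) - ∑ x ∈ s, (b x) ^ 2| ≤
      Real.sqrt (2 * (∑ x ∈ s, (a x - b x) ^ 2) * ((∑ x ∈ s, (a x) ^ 2) + ∑ x ∈ s, (b x) ^ 2)) := by
  have h1 : (∑ x ∈ s, (a x) ^ 2) - ∑ x ∈ s, (b x) ^ 2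
      = ∑ x ∈ s, (a x - b x) * (a x + b x) := by
    rw [← Finset.sum_sub_distrib]
    exact Finset.sum_congr rfl fun x _ => by ring
  rw [h1, ← Real.sqrt_sq_eq_abs]
  apply Real.sqrt_le_sqrt
  have hnn : (0:ℝ) ≤ ∑ x ∈ s, (a x - b x) ^ 2 := Finset.sum_nonneg fun x _ => sq_nonneg _
  calc (∑ x ∈ s, (a x - b x) * (a x + b x)) ^ 2
      ≤ (∑ x ∈ s, (a x - b x) ^ 2) * ∑ x ∈ s, (a x + b x) ^ 2 :=
        Finset.sum_mul_sq_le_sq_mul_sq s _ _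
    _ ≤ (∑ x ∈ s, (a x - b x) ^ 2) * (2 * ((∑ x ∈ s, (a x) ^ 2) + ∑ x ∈ s, (b x) ^ 2)) := by
        refine mul_le_mul_of_nonneg_left ?_ hnn
        calc (∑ x ∈ s, (a x + b x) ^ 2)
            ≤ ∑ x ∈ s, (2 * (a x) ^ 2 + 2 * (b x) ^ 2) :=
              Finset.sum_le_sum fun x _ => by nlinarith [sq_nonneg (a x - b x)]
          _ = 2 * ((∑ x ∈ s, (a x) ^ 2) + ∑ x ∈ s, (b x) ^ 2) := by
              rw [Finset.sum_add_distrib, ← Finset.mul_sum, ← Finset.mul_sum]; ring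
    _ = 2 * (∑ x ∈ s, (a x - b x) ^ 2) * ((∑ x ∈ s, (a x) ^ 2) + ∑ x ∈ s, (b x) ^ 2) := by ring

theorem stmt4 (f : ℕ → ℝ) (Mf : ℕ → ℝ) (N H : ℕ) (hN : 0 < N) (hH : 0 < H) :
    |Jtil f Mf N H - Jsel f Mf N H| ≤
      Real.sqrt (2 * Jw' f N H * (Jtil f Mf N H + Jsel f Mf N H)) := by
  have key := CSkey (Finset.Ioc N (2 * N))
    (fun x => (∑ n ∈ Finset.Icc 1 (x + H), cesaroH H ((n : ℤ) - (x : ℤ)) * f n) - Mf x)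
    (fun x => (∑ n ∈ Finset.Icc 1 (x + H), uH H ((n : ℤ) - (x : ℤ)) * f n) - Mf x)
  have hx1 : ∀ x ∈ Finset.Ioc N (2 * N), 1 ≤ x := fun x hx =>
    le_trans hN (Finset.mem_Ioc.mp hx).1.le
  have hJt : Jtil f Mf N H = ∑ x ∈ Finset.Ioc N (2 * N),
      ((∑ n ∈ Finset.Icc 1 (x + H), cesaroH H ((n : ℤ) - (x : ℤ)) * f n) - Mf x) ^ 2 := by
    refine Finset.sum_congr rfl fun x hx => ?_
    rw [E1 f x H hH (hx1 x hx)]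
  have hJs : Jsel f Mf N H = ∑ x ∈ Finset.Ioc N (2 * N),
      ((∑ n ∈ Finset.Icc 1 (x + H), uH H ((n : ℤ) - (x : ℤ)) * f n) - Mf x) ^ 2 := by
    refine Finset.sum_congr rfl fun x hx => ?_
    rw [E2 f x H (hx1 x hx)]
  have hJw : Jw' f N H = ∑ x ∈ Finset.Ioc N (2 * N),
      (((∑ n ∈ Finset.Icc 1 (x + H), cesaroH H ((n : ℤ) - (x : ℤ)) * f n) - Mf x)
        - ((∑ n ∈ Finset.Icc 1 (x + H), uH H ((n : ℤ) - (x : ℤ)) * f n) - Mf x)) ^ 2 := by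
    refine Finset.sum_congr rfl fun x hx => ?_
    congr 1
    rw [sub_sub_sub_cancel_right, ← Finset.sum_sub_distrib]
    exact Finset.sum_congr rfl fun n _ => by ring
  rw [hJt, hJs, hJw]
  exact key
end

section
/- Let w : ℤ → ℂ be a good weight, i.e. there is K with |w(n)| ≤ K for all n ∈ ℤ and there is C such that |Σ_{a≡0 (mod ℓ)} 𝒞_{w_H}(a) − (1/ℓ)·Σ_{a∈ℤ} 𝒞_{w_H}(a)| ≤ C·H for every positive integer H and every 1 ≤ ℓ ≤ 2H. Then there exists C′ > 0 (depending only on K and C) such that for every positive integer H and every integer q ≥ 1, (1/q)·Σ_{j=1}^{q−1} |ŵ_H(j/q)|² ≤ C′·H. -/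
/-- `e(t) = e^{2πit}`. -/
noncomputable def eC (t : ℝ) : ℂ := Complex.exp (2 * Real.pi * Complex.I * t)

/-- The restriction `w_H` of a weight `w` to `[-H,H]`. -/
noncomputable def wres (w : ℤ → ℂ) (H : ℕ) (a : ℤ) : ℂ := if |a| ≤ (H : ℤ) then w a else 0

/-- The discrete Fourier transform `ŵ_H(α) = Σ_{|a|≤H} w(a) e(aα)`. -/
noncomputable def dft (w : ℤ → ℂ) (H : ℕ) (α : ℝ) : ℂ :=
  ∑ a ∈ Finset.Icc (-(H : ℤ)) (H : ℤ), w a * eC ((a : ℝ) * α)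

/-- The correlation `𝒞_{w_H}(a) = Σ_m w_H(m)·conj(w_H(m-a))`. -/
noncomputable def corrW (w : ℤ → ℂ) (H : ℕ) (a : ℤ) : ℂ :=
  ∑ m ∈ Finset.Icc (-(H : ℤ)) (H : ℤ), wres w H m * (starRingEnd ℂ) (wres w H (m - a))

lemma eC_add (s t : ℝ) : eC (s + t) = eC s * eC t := by
  simp only [eC, Complex.ofReal_add, mul_add, Complex.exp_add]

lemma eC_zero : eC 0 = 1 := by simp [eC]

lemma eC_int (n : ℤ) : eC n = 1 := by
  rw [eC]
  rw [show ((2:ℂ) * Real.pi * Complex.I * (n:ℝ)) = (n:ℤ) * (2 * Real.pi * Complex.I) by push_cast; ring]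
  exact Complex.exp_int_mul_two_pi_mul_I n

lemma eC_pow (t : ℝ) (n : ℕ) : eC t ^ n = eC (n * t) := by
  rw [eC, eC, ← Complex.exp_nat_mul]
  push_cast; ring_nf

lemma eC_conj (t : ℝ) : (starRingEnd ℂ) (eC t) = eC (-t) := by
  rw [eC, eC, ← Complex.exp_conj]
  congr 1
  simp only [map_mul, Complex.conj_I, Complex.conj_ofReal, map_ofNat, Complex.ofReal_neg]
  ring

lemma sum_eC_div (a : ℤ) (q : ℕ) (hq : 1 ≤ q) :
    ∑ j ∈ Finset.range q, eC ((a : ℝ) * ((j : ℝ) / (q : ℝ))) =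
      if (q : ℤ) ∣ a then (q : ℂ) else 0 := by
  have hq0 : (q : ℝ) ≠ 0 := by positivity
  have hterm : ∀ j : ℕ, eC ((a : ℝ) * ((j : ℝ) / (q : ℝ))) = eC ((a : ℝ) / q) ^ j := by
    intro j
    rw [eC_pow]
    congr 1
    field_simp
  simp only [hterm]
  by_cases hdvd : (q : ℤ) ∣ a
  · rw [if_pos hdvd]
    obtain ⟨c, hc⟩ := hdvd
    have h2 : eC ((a : ℝ) / q) = 1 := by
      rw [show ((a : ℝ) / q) = ((c : ℤ) : ℝ) by rw [hc]; push_cast; field_simp, eC_int]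
    simp [h2]
  · have hne : eC ((a : ℝ) / q) ≠ 1 := by
      intro h1
      rw [eC, Complex.exp_eq_one_iff] at h1
      obtain ⟨n, hn⟩ := h1
      have hpi : (2 * (Real.pi:ℂ) * Complex.I) ≠ 0 := by
        simp [Real.pi_ne_zero, Complex.I_ne_zero]
      have hcast : (((a:ℝ)/q : ℝ) : ℂ) = (n : ℂ) := by
        apply mul_left_cancel₀ hpi
        rw [hn]; ring
      have hr : ((a : ℝ) / q) = (n : ℝ) := by exact_mod_cast hcast
      have hreal : (a : ℝ) = (n : ℝ) * q := by
        field_simp at hr; linarith [hr]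
      have hza : a = n * q := by exact_mod_cast hreal
      exact hdvd ⟨n, by rw [hza]; ring⟩
    rw [geom_sum_eq hne, eC_pow]
    rw [show ((q : ℝ) * ((a:ℝ)/q)) = ((a : ℤ) : ℝ) by field_simp]
    simp [eC_int, hdvd]

lemma dft_mul_conj (w : ℤ → ℂ) (H : ℕ) (α : ℝ) :
    dft w H α * (starRingEnd ℂ) (dft w H α)
      = ∑ a ∈ Finset.Icc (-(2 * H : ℤ)) (2 * H : ℤ), corrW w H a * eC ((a : ℝ) * α) := by
  have key : ∀ a, corrW w H a * eC ((a:ℝ) * α)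
      = ∑ m ∈ Finset.Icc (-(H : ℤ)) (H : ℤ),
          wres w H m * (starRingEnd ℂ) (wres w H (m - a)) * eC ((a:ℝ) * α) := by
    intro a; rw [corrW, Finset.sum_mul]
  simp only [key]
  rw [Finset.sum_comm]
  have inner : ∀ m ∈ Finset.Icc (-(H : ℤ)) (H : ℤ),
      (∑ a ∈ Finset.Icc (-(2 * H : ℤ)) (2 * H : ℤ),
        wres w H m * (starRingEnd ℂ) (wres w H (m - a)) * eC ((a:ℝ) * α))
      = ∑ m' ∈ Finset.Icc (-(H : ℤ)) (H : ℤ),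
          (w m * eC ((m:ℝ) * α)) * ((starRingEnd ℂ) (w m') * eC (-((m':ℝ) * α))) := by
    intro m hm
    rw [Finset.mem_Icc] at hm
    have hsub : Finset.Icc (m - (H:ℤ)) (m + H) ⊆ Finset.Icc (-(2*H:ℤ)) (2*H) := by
      apply Finset.Icc_subset_Icc <;> omega
    have hzero : ∀ x ∈ Finset.Icc (-(2*H:ℤ)) (2*H), x ∉ Finset.Icc (m - (H:ℤ)) (m + H) →
        wres w H m * (starRingEnd ℂ) (wres w H (m - x)) * eC ((x:ℝ) * α) = 0 := by
      intro x hx hnx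
      rw [Finset.mem_Icc] at hnx
      push_neg at hnx
      have habs : ¬ |m - x| ≤ (H:ℤ) := by
        rw [abs_le]; push_neg; omega
      simp [wres, habs]
    rw [← Finset.sum_subset hsub hzero]
    rw [Finset.sum_nbij' (i := fun a => m - a) (j := fun m' => m - m')]
    · intro m' hm'
      rw [Finset.mem_Icc] at hm'
      rw [Finset.mem_Icc]; omega
    · intro a ha
      rw [Finset.mem_Icc] at ha
      rw [Finset.mem_Icc]; omega
    · intro a _; ring
    · intro m' _; ring
    · intro a ha
      rw [Finset.mem_Icc] at ha
      have h1 : wres w H m = w m := by rw [wres, if_pos (by rw [abs_le]; omega)]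
      have h2 : wres w H (m - a) = w (m - a) := by
        rw [wres, if_pos (by rw [abs_le]; omega)]
      rw [h1, h2]
      have h3 : ((a:ℝ) * α) = (m:ℝ) * α + (-(((m - a : ℤ):ℝ)) * α) := by push_cast; ring
      rw [h3, eC_add]
      push_cast
      ring_nf
  rw [Finset.sum_congr rfl inner]
  simp only [dft, map_sum, map_mul, eC_conj, Finset.sum_mul_sum]

theorem stmt9 (K C : ℝ) :
    ∃ C' : ℝ, 0 < C' ∧ ∀ w : ℤ → ℂ,
      (∀ n : ℤ, ‖w n‖ ≤ K) →
      (∀ H : ℕ, 0 < H → ∀ ℓ : ℕ, 1 ≤ ℓ → ℓ ≤ 2 * H →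
        ‖((∑ a ∈ (Finset.Icc (-(2 * H : ℤ)) (2 * H : ℤ)).filter (fun a => (ℓ : ℤ) ∣ a),
              corrW w H a) -
            (1 / (ℓ : ℂ)) * ∑ a ∈ Finset.Icc (-(2 * H : ℤ)) (2 * H : ℤ), corrW w H a)‖ ≤
          C * H) →
      ∀ H : ℕ, 0 < H → ∀ q : ℕ, 1 ≤ q →
        (1 / (q : ℝ)) *
            ∑ j ∈ Finset.Ico 1 q, ‖dft w H ((j : ℝ) / (q : ℝ))‖ ^ 2 ≤
          C' * H := by
  refine ⟨|C| + 6 * K ^ 2 + 1, by positivity, ?_⟩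
  intro w hw1 hw2 H hH q hq
  have hK0 : 0 ≤ K := le_trans (norm_nonneg _) (hw1 0)
  have hq0 : (0:ℝ) < (q:ℝ) := by exact_mod_cast hq
  have hqC : (q:ℂ) ≠ 0 := by
    exact_mod_cast (Nat.cast_ne_zero (R := ℂ)).mpr (by omega)
  set Sall := ∑ a ∈ Finset.Icc (-(2 * H : ℤ)) (2 * H : ℤ), corrW w H a with hSall
  set T := ∑ a ∈ (Finset.Icc (-(2 * H : ℤ)) (2 * H : ℤ)).filter (fun a => (q : ℤ) ∣ a),
      corrW w H a with hT
  set S := ∑ j ∈ Finset.Ico 1 q, (‖dft w H ((j : ℝ) / (q : ℝ))‖) ^ 2 with hS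
  -- Sum over full range equals q * T
  have hrange : (∑ j ∈ Finset.range q,
      dft w H ((j:ℝ)/(q:ℝ)) * (starRingEnd ℂ) (dft w H ((j:ℝ)/(q:ℝ)))) = (q:ℂ) * T := by
    simp only [dft_mul_conj]
    rw [Finset.sum_comm]
    have h1 : ∀ a ∈ Finset.Icc (-(2 * H : ℤ)) (2 * H : ℤ),
        (∑ j ∈ Finset.range q, corrW w H a * eC ((a:ℝ) * ((j:ℝ)/(q:ℝ))))
        = corrW w H a * (if (q:ℤ) ∣ a then (q:ℂ) else 0) := by
      intro a _
      rw [← Finset.mul_sum, sum_eC_div a q hq]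
    rw [Finset.sum_congr rfl h1]
    have h2 : (∑ a ∈ Finset.Icc (-(2 * H : ℤ)) (2 * H : ℤ),
        corrW w H a * (if (q:ℤ) ∣ a then (q:ℂ) else 0))
        = ∑ a ∈ (Finset.Icc (-(2 * H : ℤ)) (2 * H : ℤ)).filter (fun a => (q : ℤ) ∣ a),
            corrW w H a * (q:ℂ) := by
      rw [Finset.sum_filter]
      apply Finset.sum_congr rfl
      intro a _
      split_ifs <;> simp
    rw [h2, ← Finset.sum_mul, ← hT]
    ring
  -- the zero frequency term equals Sall
  have hzero : dft w H (((0:ℕ):ℝ)/(q:ℝ)) * (starRingEnd ℂ) (dft w H (((0:ℕ):ℝ)/(q:ℝ))) = Sall := by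
    have h0 : (((0:ℕ):ℝ)/(q:ℝ)) = (0:ℝ) := by simp
    rw [h0, dft_mul_conj, hSall]
    apply Finset.sum_congr rfl
    intro a _
    rw [show ((a:ℝ) * 0) = (0:ℝ) by ring, eC_zero, mul_one]
  -- split off j = 0
  have hsplit : (∑ j ∈ Finset.range q,
      dft w H ((j:ℝ)/(q:ℝ)) * (starRingEnd ℂ) (dft w H ((j:ℝ)/(q:ℝ))))
      = Sall + ∑ j ∈ Finset.Ico 1 q,
          dft w H ((j:ℝ)/(q:ℝ)) * (starRingEnd ℂ) (dft w H ((j:ℝ)/(q:ℝ))) := by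
    rw [Finset.range_eq_Ico, Finset.sum_eq_sum_Ico_succ_bot (by omega : 0 < q)]
    rw [← hzero]
  -- cast S to ℂ
  have hScast : ((S:ℝ):ℂ) = ∑ j ∈ Finset.Ico 1 q,
      dft w H ((j:ℝ)/(q:ℝ)) * (starRingEnd ℂ) (dft w H ((j:ℝ)/(q:ℝ))) := by
    rw [hS]
    push_cast
    apply Finset.sum_congr rfl
    intro j _
    rw [Complex.mul_conj]
    norm_cast
    rw [Complex.sq_norm]
  have hSC : ((S:ℝ):ℂ) = (q:ℂ) * T - Sall := by
    rw [hScast, ← hrange, hsplit]; ring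
  -- the main identity as real numbers
  have hSnn : 0 ≤ (1/(q:ℝ)) * S := by
    apply mul_nonneg (by positivity)
    rw [hS]
    apply Finset.sum_nonneg
    intro j _; positivity
  have hDmain : (1/(q:ℝ)) * S = ‖T - (1/(q:ℂ)) * Sall‖ := by
    have hD : ((((1/(q:ℝ)) * S : ℝ)):ℂ) = T - (1/(q:ℂ)) * Sall := by
      push_cast
      rw [hSC]
      field_simp
    rw [← hD, Complex.norm_real, Real.norm_eq_abs, abs_of_nonneg hSnn]
  rw [hDmain]
  rcases le_or_gt q (2 * H) with hle | hgt
  · have := hw2 H hH q hq hle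
    calc ‖T - (1/(q:ℂ)) * Sall‖ ≤ C * H := this
      _ ≤ (|C| + 6 * K ^ 2 + 1) * H := by
          apply mul_le_mul_of_nonneg_right _ (by positivity)
          nlinarith [le_abs_self C, sq_nonneg K]
  · -- q > 2H : only a = 0 survives
    have hq2 : (2 * H : ℤ) < (q:ℤ) := by exact_mod_cast hgt
    have hfil : (Finset.Icc (-(2 * H : ℤ)) (2 * H : ℤ)).filter (fun a => (q : ℤ) ∣ a)
        = {0} := by
      ext a
      simp only [Finset.mem_filter, Finset.mem_Icc, Finset.mem_singleton]
      constructor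
      · rintro ⟨⟨h1, h2⟩, c, hc⟩
        rcases lt_trichotomy c 0 with h | h | h
        · exfalso; nlinarith
        · rw [hc, h, mul_zero]
        · exfalso; nlinarith
      · rintro rfl
        exact ⟨⟨by omega, by omega⟩, dvd_zero _⟩
    have hT0 : T = corrW w H 0 := by rw [hT, hfil, Finset.sum_singleton]
    -- bounds
    have hcard : ((Finset.Icc (-(H:ℤ)) (H:ℤ)).card : ℝ) = 2 * H + 1 := by
      have : (Finset.Icc (-(H:ℤ)) (H:ℤ)).card = 2 * H + 1 := by
        rw [Int.card_Icc]; omega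
      rw [this]; push_cast; ring
    have hwres : ∀ m : ℤ, ‖wres w H m‖ ≤ K := by
      intro m
      rw [wres]
      split_ifs
      · exact hw1 m
      · simpa using hK0
    have hbT : ‖corrW w H 0‖ ≤ (2 * H + 1) * K ^ 2 := by
      rw [corrW]
      refine le_trans (norm_sum_le _ _) ?_
      have : ∀ m ∈ Finset.Icc (-(H:ℤ)) (H:ℤ),
          ‖wres w H m * (starRingEnd ℂ) (wres w H (m - 0))‖ ≤ K ^ 2 := by
        intro m _
        rw [norm_mul, Complex.norm_conj]
        calc ‖wres w H m‖ * ‖wres w H (m - 0)‖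
            ≤ K * K := mul_le_mul (hwres m) (hwres (m - 0)) (norm_nonneg _) hK0
          _ = K ^ 2 := by ring
      refine le_trans (Finset.sum_le_sum this) ?_
      rw [Finset.sum_const, nsmul_eq_mul, hcard]
    have hdft0 : ‖dft w H 0‖ ≤ (2 * H + 1) * K := by
      rw [dft]
      refine le_trans (norm_sum_le _ _) ?_
      have : ∀ a ∈ Finset.Icc (-(H:ℤ)) (H:ℤ),
          ‖w a * eC ((a:ℝ) * 0)‖ ≤ K := by
        intro a _
        rw [show ((a:ℝ) * 0) = (0:ℝ) by ring, eC_zero, mul_one]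
        exact hw1 a
      refine le_trans (Finset.sum_le_sum this) ?_
      rw [Finset.sum_const, nsmul_eq_mul, hcard]
    have hbS : ‖Sall‖ ≤ ((2 * H + 1) * K) ^ 2 := by
      have hS0 : Sall = dft w H 0 * (starRingEnd ℂ) (dft w H 0) := by
        rw [hSall, dft_mul_conj]
        apply Finset.sum_congr rfl
        intro a _
        rw [show ((a:ℝ) * 0) = (0:ℝ) by ring, eC_zero, mul_one]
      rw [hS0, norm_mul, Complex.norm_conj]
      calc ‖dft w H 0‖ * ‖dft w H 0‖
          ≤ ((2 * H + 1) * K) * ((2 * H + 1) * K) := by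
            apply mul_le_mul hdft0 hdft0 (norm_nonneg _)
            positivity
        _ = ((2 * H + 1) * K) ^ 2 := by ring
    -- combine
    have h2 : ‖(1/(q:ℂ)) * Sall‖ = (1/(q:ℝ)) * ‖Sall‖ := by
      rw [norm_mul, norm_div, norm_one, Complex.norm_natCast]
    have htri : ‖T - (1/(q:ℂ)) * Sall‖
        ≤ ‖T‖ + (1/(q:ℝ)) * ‖Sall‖ := by
      rw [← h2]
      exact norm_sub_le _ _
    have hH1 : (1:ℝ) ≤ (H:ℝ) := by exact_mod_cast hH
    have h1q : (1:ℝ)/(q:ℝ) ≤ 1/(2 * H + 1) := by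
      apply one_div_le_one_div_of_le (by positivity)
      exact_mod_cast (by omega : 2 * H + 1 ≤ q)
    calc ‖T - (1/(q:ℂ)) * Sall‖
        ≤ ‖T‖ + (1/(q:ℝ)) * ‖Sall‖ := htri
      _ ≤ (2 * H + 1) * K ^ 2 + (1/(2 * H + 1:ℝ)) * ((2 * H + 1) * K) ^ 2 := by
          apply add_le_add
          · rw [hT0]; exact hbT
          · apply mul_le_mul h1q hbS (norm_nonneg _) (by positivity)
      _ = 2 * ((2 * H + 1) * K ^ 2) := by
          field_simp
          ring
      _ ≤ (|C| + 6 * K ^ 2 + 1) * H := by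
          nlinarith [abs_nonneg C, sq_nonneg K, hK0]
end
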